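/- Let G be a directed graph, let u = (v_1, ..., v_p) be a unitig in G, and let g be a walk in G that contains v_1 as its i-th vertex with i + p − 1 not exceeding the length of g, such that g does not end before p−1 further steps. If every vertex v_1, ..., v_{p−1} of the unitig has out-degree 1 and g passes through v_1 at position i and g has at least p−1 more steps after position i, then the vertices of g at positions i, i+1, ..., i+p−1 are exactly v_1, v_2, ..., v_p. -/

import Mathlib

theorem aux_walk_follows {V : Type*} [Inhabited V] (E : V → V → Prop) :
    ∀ (u g : List V), u.Chain' E → u ≠ [] →
      (∀ v ∈ u.dropLast, ∃! x, E v x) →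
      g.Chain' E → u.length ≤ g.length → g.headI = u.headI →
      g.take u.length = u
  | [], _, _, h, _, _, _, _ => absurd rfl h
  | [a], g, _, _, _, _, hlen, hhead => by
      cases g with
      | nil => simp at hlen
      | cons x g' => simp_all
  | a :: b :: u', g, hu, _, hdeg, hg, hlen, hhead => by
      cases g with
      | nil => simp at hlen
      | cons x g' =>
        cases g' with
        | nil => simp at hlen
        | cons y g'' =>
          rw [show x = a by simpa using hhead] at hg ⊢
          simp only [List.Chain', List.isChain_cons_cons] at hu hg
          have hab : a ∈ (a :: b :: u').dropLast := by simp
          obtain ⟨z, _, huniq⟩ := hdeg a hab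
          have hyb : y = b := by rw [huniq y hg.1, huniq b hu.1]
          subst hyb
          have hrec := aux_walk_follows E (y :: u') (y :: g'') hu.2 (by simp)
            (fun v hv => hdeg v (by
              rw [List.dropLast_cons₂] at *; exact List.mem_cons_of_mem _ hv))
            hg.2 (by simpa using hlen) rfl
          simpa using hrec

/-- If a walk `g` passes through the first vertex of a unitig `u` at position `i`, and
has at least `u.length - 1` further steps, then the vertices of `g` at positions
`i, ..., i + u.length - 1` are exactly the vertices of `u` (using that every vertex of
the unitig except the last has out-degree exactly 1). -/
theorem walk_follows_unitig {V : Type*} [Inhabited V] (E : V → V → Prop)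
    (u g : List V) (i : ℕ)
    (hu : u.Chain' E) (hune : u ≠ [])
    (hdeg : ∀ v ∈ u.dropLast, ∃! x, E v x)
    (hg : g.Chain' E)
    (hlen : i + u.length ≤ g.length)
    (hstart : g.getI i = u.headI) :
    (g.drop i).take u.length = u := by
  have hupos : 0 < u.length := List.length_pos_iff.mpr hune
  have hi : i < g.length := by omega
  have hdne : g.drop i ≠ [] := by
    simp [List.drop_eq_nil_iff]; omega
  have h0 : 0 < (g.drop i).length := by simp; omega
  have hhead : (g.drop i).headI = u.headI := by
    rw [← List.getI_zero_eq_headI, ← hstart,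
      List.getI_eq_getElem _ h0, List.getI_eq_getElem _ hi]
    simp
  exact aux_walk_follows E u (g.drop i) hu hune hdeg (hg.drop i)
    (by simp; omega) hhead
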